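/- Let ρ be a state ε-close in trace norm (0 < ε < 1) to α_m = U(P_m ⊗ σ)U† on system AA'B', where P_m is the projector onto the uniform-superposition state of an m-qubit register A and U is a controlled unitary with control A. Then the probability distribution obtained by untwisting with U†, tracing out A'B', and measuring A in the Fourier basis has relative entropy at least (1−ε)m − h(ε) from the uniform distribution on 2^m outcomes. -/

import Mathlib

open Matrix BigOperators Filter ComplexOrder

noncomputable section

def swapM (d : ℕ) : Matrix (Fin d × Fin d) (Fin d × Fin d) ℂ :=
  fun p q => if p.1 = q.2 ∧ p.2 = q.1 then 1 else 0

def phiProj (d : ℕ) : Matrix (Fin d × Fin d) (Fin d × Fin d) ℂ :=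
  fun p q => if p.1 = p.2 ∧ q.1 = q.2 then (d : ℂ)⁻¹ else 0

def ptB {d : ℕ} (ρ : Matrix (Fin d × Fin d) (Fin d × Fin d) ℂ) :
    Matrix (Fin d × Fin d) (Fin d × Fin d) ℂ :=
  fun p q => ρ (p.1, q.2) (q.1, p.2)

def rhoS (d : ℕ) : Matrix (Fin d × Fin d) (Fin d × Fin d) ℂ :=
  ((d : ℂ)^2 + (d : ℂ))⁻¹ • (1 + swapM d)

def rhoA (d : ℕ) : Matrix (Fin d × Fin d) (Fin d × Fin d) ℂ :=
  ((d : ℂ)^2 - (d : ℂ))⁻¹ • (1 - swapM d)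

def wernerT (d : ℕ) (θ : ℝ) : Matrix (Fin d × Fin d) (Fin d × Fin d) ℂ :=
  ((1 - θ : ℝ) : ℂ) • rhoS d + ((θ : ℝ) : ℂ) • rhoA d

def wernerA (d : ℕ) (α : ℝ) : Matrix (Fin d × Fin d) (Fin d × Fin d) ℂ :=
  (((1 + α) / 2 : ℝ) : ℂ) • rhoS d + (((1 - α) / 2 : ℝ) : ℂ) • rhoA d

def trB {dA dB : ℕ} (ρ : Matrix (Fin dA × Fin dB) (Fin dA × Fin dB) ℂ) :
    Matrix (Fin dA) (Fin dA) ℂ :=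
  fun i k => ∑ j, ρ (i, j) (k, j)

def trA {dA dB : ℕ} (ρ : Matrix (Fin dA × Fin dB) (Fin dA × Fin dB) ℂ) :
    Matrix (Fin dB) (Fin dB) ℂ :=
  fun j l => ∑ i, ρ (i, j) (i, l)

def nlog2 (x : ℝ) : ℝ := -(x * Real.logb 2 x)

def binEnt (p : ℝ) : ℝ := nlog2 p + nlog2 (1 - p)

def vN {n : Type*} [Fintype n] [DecidableEq n] (ρ : Matrix n n ℂ) : ℝ :=
  if h : ρ.IsHermitian then ∑ i, nlog2 (h.eigenvalues i) else 0

def mutInfo {dA dB : ℕ} (ρ : Matrix (Fin dA × Fin dB) (Fin dA × Fin dB) ℂ) : ℝ :=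
  vN (trB ρ) + vN (trA ρ) - vN ρ

def traceNorm {n : Type*} [Fintype n] [DecidableEq n] (X : Matrix n n ℂ) : ℝ :=
  if h : X.IsHermitian then ∑ i, |h.eigenvalues i| else 0

def mlog {n : Type*} [Fintype n] [DecidableEq n] (A : Matrix n n ℂ) : Matrix n n ℂ :=
  if h : A.IsHermitian then
    (h.eigenvectorUnitary : Matrix n n ℂ) *
      Matrix.diagonal (fun i => ((Real.logb 2 (h.eigenvalues i) : ℝ) : ℂ)) *
      (star (h.eigenvectorUnitary : Matrix n n ℂ))
  else 0

def qRelEnt {n : Type*} [Fintype n] [DecidableEq n] (ρ σ : Matrix n n ℂ) : ℝ :=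
  ((ρ * mlog ρ - ρ * mlog σ).trace).re

def tpow {m : Type*} [Fintype m] (ρ : Matrix m m ℂ) (n : ℕ) :
    Matrix (Fin n → m) (Fin n → m) ℂ :=
  fun f g => ∏ i, ρ (f i) (g i)

def klDiv2 {ι : Type*} [Fintype ι] (p q : ι → ℝ) : ℝ :=
  ∑ i, p i * Real.logb 2 (p i / q i)

def phiVec (d : ℕ) : Fin d × Fin d → ℂ :=
  fun p => if p.1 = p.2 then (Complex.ofReal (Real.sqrt d))⁻¹ else 0

def ctrlU {N : ℕ} {n' : Type*} (Ui : Fin N → Matrix n' n' ℂ) :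
    Matrix (Fin N × n') (Fin N × n') ℂ :=
  fun p q => if p.1 = q.1 then Ui p.1 p.2 q.2 else 0

def pmTensor (N : ℕ) {n' : Type*} (σ : Matrix n' n' ℂ) :
    Matrix (Fin N × n') (Fin N × n') ℂ :=
  fun p q => (N : ℂ)⁻¹ * σ p.2 q.2

def fourierVec (N : ℕ) (k : Fin N) : Fin N → ℂ :=
  fun j => Complex.exp (2 * Real.pi * Complex.I * ((k : ℕ) : ℂ) * ((j : ℕ) : ℂ) / (N : ℂ))
    / (Real.sqrt N : ℂ)

def redA {N : ℕ} {n' : Type*} [Fintype n']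
    (X : Matrix (Fin N × n') (Fin N × n') ℂ) : Matrix (Fin N) (Fin N) ℂ :=
  fun i j => ∑ a, X (i, a) (j, a)

def probF {N : ℕ} {n' : Type*} [Fintype n']
    (X : Matrix (Fin N × n') (Fin N × n') ℂ) (k : Fin N) : ℝ :=
  (star (fourierVec N k) ⬝ᵥ (redA X).mulVec (fourierVec N k)).re

lemma nlog2_nonneg {x : ℝ} (h0 : 0 ≤ x) (h1 : x ≤ 1) : 0 ≤ nlog2 x := by
  unfold nlog2
  have : x * Real.logb 2 x ≤ 0 :=
    mul_nonpos_of_nonneg_of_nonpos h0 (Real.logb_nonpos one_lt_two h0 h1)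
  linarith

lemma gibbs {N : ℕ} (p q : Fin N → ℝ) (hp : ∀ k, 0 ≤ p k) (hq : ∀ k, 0 < q k)
    (hpq : ∑ k, q k ≤ ∑ k, p k) :
    0 ≤ ∑ k, p k * Real.logb 2 (p k / q k) := by
  have key : ∀ k, p k - q k ≤ p k * Real.log (p k / q k) := by
    intro k
    rcases eq_or_lt_of_le (hp k) with h0 | h0
    · simp [← h0]
      linarith [(hq k).le]
    · have hqp : 0 < q k / p k := div_pos (hq k) h0
      have := Real.log_le_sub_one_of_pos hqp
      have hlog : Real.log (q k / p k) = - Real.log (p k / q k) := by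
        rw [← Real.log_inv]
        congr 1
        field_simp
      rw [hlog] at this
      have h2 : q k / p k - 1 = (q k - p k) / p k := by field_simp
      rw [h2] at this
      have h3 := mul_le_mul_of_nonneg_right this h0.le
      rw [div_mul_cancel₀ _ h0.ne'] at h3
      nlinarith [h3]
  have hsum : ∑ k, (p k - q k) ≤ ∑ k, p k * Real.log (p k / q k) :=
    Finset.sum_le_sum (fun k _ => key k)
  have h1 : (0:ℝ) ≤ ∑ k, p k * Real.log (p k / q k) := by
    rw [Finset.sum_sub_distrib] at hsum
    linarith
  have h2 : ∑ k, p k * Real.logb 2 (p k / q k)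
      = (∑ k, p k * Real.log (p k / q k)) / Real.log 2 := by
    rw [Finset.sum_div]
    congr 1; ext k
    rw [Real.logb]
    ring
  rw [h2]
  exact div_nonneg h1 (Real.log_nonneg one_le_two)

lemma logb_two_pow (m : ℕ) : Real.logb 2 ((2:ℝ)^m) = m := by
  rw [Real.logb_pow]
  simp

lemma classical_bound (m : ℕ) (ε : ℝ) (hε : 0 < ε) (hε1 : ε < 1)
    (p : Fin (2^m) → ℝ) (k0 : Fin (2^m)) (hp0 : ∀ k, 0 ≤ p k)
    (hps : ∑ k, p k = 1) (hpz : 1 - ε ≤ p k0) :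
    (1-ε)*m - binEnt ε ≤ ∑ k, p k * Real.logb 2 (p k * 2^m) := by
  set NR : ℝ := (2:ℝ)^m with hNRdef
  have hNR0 : 0 < NR := by positivity
  have hNR1 : 1 ≤ NR := one_le_pow₀ (by norm_num)
  have hm : Real.logb 2 NR = m := logb_two_pow m
  have hcard : (Finset.univ : Finset (Fin (2^m))).card = 2^m := by
    simp
  have hcastN : ((2^m : ℕ) : ℝ) = NR := by push_cast; rfl
  -- nonnegativity of the divergence
  have hD0 : 0 ≤ ∑ k, p k * Real.logb 2 (p k * NR) := by
    have := gibbs p (fun _ => NR⁻¹) hp0 (fun _ => by positivity)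
      (by
        rw [hps, Finset.sum_const, hcard, nsmul_eq_mul, hcastN,
          mul_inv_cancel₀ hNR0.ne'])
    have he : ∀ k, p k / (fun _ => NR⁻¹ : Fin (2^m) → ℝ) k = p k * NR := by
      intro k; rw [div_eq_mul_inv, inv_inv]
    calc (0:ℝ) ≤ ∑ k, p k * Real.logb 2 (p k / (fun _ => NR⁻¹ : Fin (2^m) → ℝ) k) := this
      _ = ∑ k, p k * Real.logb 2 (p k * NR) := by
          exact Finset.sum_congr rfl (fun k _ => by rw [he k])
  rcases le_or_gt ((1-ε)*NR) 1 with hcase | hcase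
  · -- target is nonpositive
    have h1e : 0 < 1 - ε := by linarith
    have hinv : NR ≤ (1-ε)⁻¹ := by
      rw [← one_div, le_div_iff₀ h1e]
      linarith [mul_comm NR (1-ε)]
    have hlog : (m:ℝ) ≤ Real.logb 2 ((1-ε)⁻¹) := by
      rw [← hm]
      exact Real.logb_le_logb_of_le one_lt_two hNR0 hinv
    have hnn : (1-ε) * m ≤ nlog2 (1-ε) := by
      have : nlog2 (1-ε) = (1-ε) * Real.logb 2 ((1-ε)⁻¹) := by
        unfold nlog2
        rw [Real.logb_inv]
        ring
      rw [this]
      exact mul_le_mul_of_nonneg_left hlog h1e.le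
    have hbe : (1-ε) * m ≤ binEnt ε := by
      have := nlog2_nonneg hε.le hε1.le
      unfold binEnt
      linarith
    linarith
  · -- main case
    have h1e : 0 < 1 - ε := by linarith
    have hM0 : 0 < NR - 1 := by nlinarith
    have hcarde : (Finset.univ.erase k0).card = 2^m - 1 := by
      rw [Finset.card_erase_of_mem (Finset.mem_univ k0), hcard]
    have hcastM : ((2^m - 1 : ℕ) : ℝ) = NR - 1 := by
      rw [Nat.cast_sub (Nat.one_le_two_pow), hcastN, Nat.cast_one]
    set q : Fin (2^m) → ℝ := fun k => if k = k0 then 1-ε else ε/(NR-1) with hqdef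
    have hq : ∀ k, 0 < q k := by
      intro k
      by_cases h : k = k0
      · simp only [hqdef, h, if_pos rfl]
        exact h1e
      · simp only [hqdef, if_neg h]
        positivity
    have hqs : ∑ k, q k = 1 := by
      rw [← Finset.add_sum_erase _ _ (Finset.mem_univ k0)]
      have h1 : q k0 = 1 - ε := by simp [hqdef]
      have h2 : ∑ k ∈ Finset.univ.erase k0, q k = ε := by
        rw [Finset.sum_congr rfl (fun k hk =>
          (if_neg (Finset.ne_of_mem_erase hk) : q k = ε/(NR-1))),
          Finset.sum_const, hcarde, nsmul_eq_mul, hcastM]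
        field_simp
      rw [h1, h2]
      ring
    -- split each term
    have hsplit : ∀ k, p k * Real.logb 2 (p k * NR)
        = p k * Real.logb 2 (p k / q k) + p k * Real.logb 2 (q k * NR) := by
      intro k
      rcases eq_or_lt_of_le (hp0 k) with h0 | h0
      · simp [← h0]
      · have h1 : (p k / q k) * (q k * NR) = p k * NR := by
          rw [div_mul_eq_mul_div, mul_left_comm, mul_div_cancel_left₀ _ (hq k).ne']
        rw [← h1, Real.logb_mul (by positivity) (by positivity), mul_add]
    have hgibbs := gibbs p q hp0 hq (by rw [hps, hqs])
    have hstep1 : ∑ k, p k * Real.logb 2 (q k * NR)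
        ≤ ∑ k, p k * Real.logb 2 (p k * NR) := by
      rw [Finset.sum_congr rfl (fun k _ => hsplit k), Finset.sum_add_distrib]
      linarith
    -- evaluate the q-sum
    set A : ℝ := Real.logb 2 ((1-ε) * NR) with hAdef
    set B : ℝ := Real.logb 2 (ε/(NR-1) * NR) with hBdef
    have hqsum : ∑ k, p k * Real.logb 2 (q k * NR)
        = p k0 * A + (1 - p k0) * B := by
      rw [← Finset.add_sum_erase _ _ (Finset.mem_univ k0)]
      have h1 : p k0 * Real.logb 2 (q k0 * NR) = p k0 * A := by simp [hqdef, hAdef]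
      have h2 : ∑ k ∈ Finset.univ.erase k0, p k * Real.logb 2 (q k * NR)
          = (1 - p k0) * B := by
        have h2' : ∀ k ∈ Finset.univ.erase k0, p k * Real.logb 2 (q k * NR) = p k * B := by
          intro k hk
          rw [show q k = ε/(NR-1) from if_neg (Finset.ne_of_mem_erase hk)]
        rw [Finset.sum_congr rfl h2', ← Finset.sum_mul]
        congr 1
        have := Finset.add_sum_erase _ p (Finset.mem_univ k0)
        rw [hps] at this
        linarith
      rw [h1, h2]
    have hBA : B ≤ A := by
      apply Real.logb_le_logb_of_le one_lt_two (by positivity)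
      have : ε / (NR - 1) ≤ 1 - ε := by
        rw [div_le_iff₀ hM0]
        nlinarith
      exact mul_le_mul_of_nonneg_right this hNR0.le
    have hABlb : (1-ε) * A + ε * B ≤ p k0 * A + (1 - p k0) * B := by
      nlinarith [hpz, hBA]
    have hA : A = Real.logb 2 (1-ε) + m := by
      rw [hAdef, Real.logb_mul (by positivity) (by positivity), hm]
    have hB : B = Real.logb 2 ε - Real.logb 2 (NR-1) + m := by
      rw [hBdef, Real.logb_mul (by positivity) (by positivity),
        Real.logb_div (by positivity) (by positivity), hm]
    have hlogM : Real.logb 2 (NR-1) ≤ m := by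
      rw [← hm]
      exact Real.logb_le_logb_of_le one_lt_two hM0 (by linarith)
    have hfinal : (1-ε)*m - binEnt ε ≤ (1-ε) * A + ε * B := by
      rw [hA, hB]
      unfold binEnt nlog2
      nlinarith [hlogM, hε.le]
    calc (1-ε)*m - binEnt ε ≤ (1-ε) * A + ε * B := hfinal
      _ ≤ p k0 * A + (1 - p k0) * B := hABlb
      _ = ∑ k, p k * Real.logb 2 (q k * NR) := hqsum.symm
      _ ≤ ∑ k, p k * Real.logb 2 (p k * NR) := hstep1

-- Fourier completeness
lemma fourier_complete {N : ℕ} (i j : Fin N) :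
    ∑ k : Fin N, (starRingEnd ℂ) (fourierVec N k i) * fourierVec N k j
      = if i = j then 1 else 0 := by
  have hN0 : 0 < N := i.pos
  have hNC : ((N:ℕ):ℂ) ≠ 0 := Nat.cast_ne_zero.mpr hN0.ne'
  have hsqrt : ((Real.sqrt N : ℝ) : ℂ) * ((Real.sqrt N : ℝ) : ℂ) = (N : ℂ) := by
    rw [← Complex.ofReal_mul, Real.mul_self_sqrt (Nat.cast_nonneg N)]
    norm_num
  set c : ℂ := 2 * Real.pi * Complex.I * (((j:ℕ):ℂ) - ((i:ℕ):ℂ)) / (N:ℂ) with hc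
  have hterm : ∀ k : Fin N,
      (starRingEnd ℂ) (fourierVec N k i) * fourierVec N k j
        = Complex.exp c ^ (k:ℕ) / (N:ℂ) := by
    intro k
    unfold fourierVec
    rw [map_div₀, ← Complex.exp_conj]
    have h1 : (starRingEnd ℂ) (2 * Real.pi * Complex.I * ((k:ℕ):ℂ) * ((i:ℕ):ℂ) / (N:ℂ))
        = -(2 * Real.pi * Complex.I * ((k:ℕ):ℂ) * ((i:ℕ):ℂ) / (N:ℂ)) := by
      rw [map_div₀, _root_.map_mul, _root_.map_mul, _root_.map_mul, Complex.conj_I]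
      rw [show (starRingEnd ℂ) (2 * (Real.pi:ℂ)) = 2 * (Real.pi:ℂ) by
        rw [_root_.map_mul, Complex.conj_ofReal, map_ofNat]]
      rw [map_natCast, map_natCast, map_natCast]
      ring
    rw [h1]
    have h2 : (starRingEnd ℂ) ((Real.sqrt N : ℝ) : ℂ) = ((Real.sqrt N : ℝ) : ℂ) :=
      Complex.conj_ofReal _
    rw [h2, div_mul_div_comm, hsqrt, ← Complex.exp_add]
    have h3 : -(2 * Real.pi * Complex.I * ((k:ℕ):ℂ) * ((i:ℕ):ℂ) / (N:ℂ))
        + 2 * Real.pi * Complex.I * ((k:ℕ):ℂ) * ((j:ℕ):ℂ) / (N:ℂ) = ((k:ℕ):ℂ) * c := by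
      rw [hc]
      field_simp
      ring
    rw [h3, Complex.exp_nat_mul]
  rw [Finset.sum_congr rfl (fun k _ => hterm k), ← Finset.sum_div]
  by_cases hij : i = j
  · subst hij
    simp only [sub_self, mul_zero, zero_div, if_pos rfl, hc]
    rw [Complex.exp_zero]
    simp only [one_pow, Finset.sum_const, Finset.card_univ, Fintype.card_fin,
      nsmul_eq_mul]
    rw [mul_one, div_self hNC, if_pos trivial]
  · rw [if_neg hij]
    have h2pi : (2 * (Real.pi:ℂ) * Complex.I) ≠ 0 := by
      simp [Real.pi_ne_zero, Complex.I_ne_zero]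
    set d : ℂ := ((j:ℕ):ℂ) - ((i:ℕ):ℂ) with hd
    have hzeta1 : Complex.exp c ≠ 1 := by
      intro habs
      rw [Complex.exp_eq_one_iff] at habs
      obtain ⟨n, hn⟩ := habs
      rw [hc] at hn
      have h4 : 2 * (Real.pi:ℂ) * Complex.I * d = 2 * (Real.pi:ℂ) * Complex.I * ((n:ℂ) * (N:ℂ)) := by
        have := congrArg (fun z => z * (N:ℂ)) hn
        rw [div_mul_cancel₀ _ hNC] at this
        rw [this]
        ring
      have h5 : d = (n:ℂ) * (N:ℂ) := mul_left_cancel₀ h2pi h4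
      have h6 : ((j:ℕ):ℤ) - ((i:ℕ):ℤ) = n * (N:ℤ) := by
        have h5' : (((j:ℕ):ℤ):ℂ) - (((i:ℕ):ℤ):ℂ) = (((n * (N:ℤ)):ℤ):ℂ) := by
          push_cast
          push_cast [hd] at h5
          linear_combination h5
        exact_mod_cast (by exact_mod_cast h5' : ((((j:ℕ):ℤ) - ((i:ℕ):ℤ) : ℤ):ℂ) = (((n * (N:ℤ)):ℤ):ℂ))
      have hj := j.isLt
      have hi := i.isLt
      have hne : (i:ℕ) ≠ (j:ℕ) := fun h => hij (Fin.ext h)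
      have hNZ : (0:ℤ) < (N:ℤ) := by exact_mod_cast hN0
      have hjZ : ((j:ℕ):ℤ) < (N:ℤ) := by exact_mod_cast hj
      have hiZ : ((i:ℕ):ℤ) < (N:ℤ) := by exact_mod_cast hi
      have hneZ : ((i:ℕ):ℤ) ≠ ((j:ℕ):ℤ) := by exact_mod_cast hne
      have hi0 : (0:ℤ) ≤ ((i:ℕ):ℤ) := Int.natCast_nonneg _
      have hj0 : (0:ℤ) ≤ ((j:ℕ):ℤ) := Int.natCast_nonneg _
      rcases lt_trichotomy n 0 with h | h | h
      · nlinarith [h6]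
      · rw [h, zero_mul] at h6
        omega
      · nlinarith [h6]
    have hzetaN : Complex.exp c ^ N = 1 := by
      rw [← Complex.exp_nat_mul]
      have : (N:ℂ) * c = ((((j:ℕ):ℤ) - ((i:ℕ):ℤ) : ℤ):ℂ) * (2 * Real.pi * Complex.I) := by
        rw [hc]
        push_cast
        field_simp
        ring
      rw [this, Complex.exp_int_mul_two_pi_mul_I]
    rw [Fin.sum_univ_eq_sum_range (fun k => Complex.exp c ^ k) N,
      geom_sum_eq hzeta1, hzetaN]
    simp

-- expand quadratic form
lemma qform_expand {n : Type*} [Fintype n] (u v : n → ℂ) (M : Matrix n n ℂ) :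
    star u ⬝ᵥ M.mulVec v = ∑ i, ∑ j, (starRingEnd ℂ) (u i) * v j * M i j := by
  unfold dotProduct Matrix.mulVec
  apply Finset.sum_congr rfl
  intro i _
  simp only [Pi.star_apply, RCLike.star_def]
  unfold dotProduct
  rw [Finset.mul_sum]
  apply Finset.sum_congr rfl
  intro j _
  ring

lemma sum_probF {N : ℕ} {n' : Type*} [Fintype n']
    (X : Matrix (Fin N × n') (Fin N × n') ℂ) :
    ∑ k, probF X k = (X.trace).re := by
  unfold probF
  rw [← Complex.re_sum]
  congr 1
  rw [Finset.sum_congr rfl (fun k _ => qform_expand (fourierVec N k) (fourierVec N k) (redA X))]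
  rw [Finset.sum_comm]
  have h1 : ∀ i : Fin N, ∑ k : Fin N, ∑ j : Fin N,
      (starRingEnd ℂ) (fourierVec N k i) * fourierVec N k j * redA X i j
      = redA X i i := by
    intro i
    rw [Finset.sum_comm]
    have h2 : ∀ j : Fin N, ∑ k : Fin N,
        (starRingEnd ℂ) (fourierVec N k i) * fourierVec N k j * redA X i j
        = (if i = j then 1 else 0) * redA X i j := by
      intro j
      rw [← Finset.sum_mul, fourier_complete]
    rw [Finset.sum_congr rfl (fun j _ => h2 j)]
    simp [ite_mul]
  rw [Finset.sum_congr rfl (fun i _ => h1 i)]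
  unfold Matrix.trace redA Matrix.diag
  rw [Fintype.sum_prod_type]

lemma probF_nonneg {N : ℕ} {n' : Type*} [Fintype n'] [DecidableEq n']
    {X : Matrix (Fin N × n') (Fin N × n') ℂ} (hX : X.PosSemidef) (k : Fin N) :
    0 ≤ probF X k := by
  unfold probF
  set f := fourierVec N k
  set w : n' → (Fin N × n' → ℂ) := fun a => fun p => if p.2 = a then f p.1 else 0 with hw
  have key : star f ⬝ᵥ (redA X).mulVec f = ∑ a : n', star (w a) ⬝ᵥ X.mulVec (w a) := by
    rw [qform_expand]
    rw [Finset.sum_congr rfl (fun a _ => qform_expand (w a) (w a) X)]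
    have hrhs : ∀ a : n', ∑ p : Fin N × n', ∑ q : Fin N × n',
        (starRingEnd ℂ) (w a p) * w a q * X p q
        = ∑ i : Fin N, ∑ j : Fin N, (starRingEnd ℂ) (f i) * f j * X (i,a) (j,a) := by
      intro a
      rw [Fintype.sum_prod_type]
      have hL : ∀ i : Fin N, ∀ b : n',
          ∑ q : Fin N × n', (starRingEnd ℂ) (w a (i,b)) * w a q * X (i,b) q
          = if b = a then ∑ j, (starRingEnd ℂ) (f i) * f j * X (i,b) (j,a) else 0 := by
        intro i b
        by_cases hb : b = a
        · subst hb
          rw [if_pos rfl, Fintype.sum_prod_type]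
          apply Finset.sum_congr rfl
          intro j _
          rw [Finset.sum_eq_single b]
          · simp [hw]
          · intro c _ hc
            simp [hw, hc]
          · intro h
            exact absurd (Finset.mem_univ b) h
        · rw [if_neg hb]
          apply Finset.sum_eq_zero
          intro q _
          simp [hw, hb]
      rw [Finset.sum_congr rfl (fun i _ => Finset.sum_congr rfl (fun b _ => hL i b))]
      apply Finset.sum_congr rfl
      intro i _
      rw [Finset.sum_ite_eq' Finset.univ a
        (fun b => ∑ j, (starRingEnd ℂ) (f i) * f j * X (i,b) (j,a)), if_pos (Finset.mem_univ a)]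
    rw [Finset.sum_congr rfl (fun a _ => hrhs a)]
    have hlhs : ∀ i : Fin N, ∀ j : Fin N,
        (starRingEnd ℂ) (f i) * f j * redA X i j
        = ∑ a : n', (starRingEnd ℂ) (f i) * f j * X (i,a) (j,a) := by
      intro i j
      unfold redA
      rw [Finset.mul_sum]
    rw [Finset.sum_congr rfl (fun i _ => Finset.sum_congr rfl (fun j _ => hlhs i j))]
    rw [Finset.sum_congr rfl (fun i _ => Finset.sum_comm (s := Finset.univ) (t := Finset.univ)), Finset.sum_comm]
  rw [key, Complex.re_sum]
  apply Finset.sum_nonneg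
  intro a _
  have := hX.dotProduct_mulVec_nonneg (w a)
  exact (Complex.le_def.mp this).1

lemma probF_zero {N : ℕ} {n' : Type*} [Fintype n'] [DecidableEq n'] (hN : 0 < N)
    (Y : Matrix (Fin N × n') (Fin N × n') ℂ) :
    probF Y ⟨0, hN⟩ = ((pmTensor N (1 : Matrix n' n' ℂ) * Y).trace).re := by
  have hNC : ((N:ℕ):ℂ) ≠ 0 := Nat.cast_ne_zero.mpr hN.ne'
  have hsqrt : ((Real.sqrt N : ℝ) : ℂ) * ((Real.sqrt N : ℝ) : ℂ) = (N : ℂ) := by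
    rw [← Complex.ofReal_mul, Real.mul_self_sqrt (Nat.cast_nonneg N)]
    norm_num
  have hf : ∀ j : Fin N, fourierVec N (⟨0, hN⟩ : Fin N) j = ((Real.sqrt N : ℝ) : ℂ)⁻¹ := by
    intro j
    unfold fourierVec
    norm_num
  unfold probF
  congr 1
  rw [qform_expand]
  have hl : ∀ i j : Fin N, (starRingEnd ℂ) (fourierVec N (⟨0, hN⟩ : Fin N) i) *
      fourierVec N (⟨0, hN⟩ : Fin N) j * redA Y i j = (N:ℂ)⁻¹ * redA Y i j := by
    intro i j
    rw [hf, hf, map_inv₀, Complex.conj_ofReal, ← mul_inv, hsqrt]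
  rw [Finset.sum_congr rfl (fun i _ => Finset.sum_congr rfl (fun j _ => hl i j))]
  have hR : ∀ (i : Fin N) (a : n') (j : Fin N),
      ∑ b : n', (N:ℂ)⁻¹ * (1 : Matrix n' n' ℂ) a b * Y (j,b) (i,a)
        = (N:ℂ)⁻¹ * Y (j,a) (i,a) := by
    intro i a j
    rw [Finset.sum_eq_single a]
    · simp [Matrix.one_apply]
    · intro b _ hb
      simp [Matrix.one_apply, Ne.symm hb]
    · intro h
      exact absurd (Finset.mem_univ a) h
  have htr : (pmTensor N (1 : Matrix n' n' ℂ) * Y).trace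
      = ∑ i : Fin N, ∑ j : Fin N, (N:ℂ)⁻¹ * redA Y j i := by
    unfold Matrix.trace Matrix.diag
    rw [Fintype.sum_prod_type]
    apply Finset.sum_congr rfl
    intro i _
    calc ∑ a, (pmTensor N (1 : Matrix n' n' ℂ) * Y) (i,a) (i,a)
        = ∑ a, ∑ j, ∑ b, (N:ℂ)⁻¹ * (1 : Matrix n' n' ℂ) a b * Y (j,b) (i,a) := by
          apply Finset.sum_congr rfl
          intro a _
          rw [Matrix.mul_apply, Fintype.sum_prod_type]
          rfl
      _ = ∑ a, ∑ j, (N:ℂ)⁻¹ * Y (j,a) (i,a) := by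
          apply Finset.sum_congr rfl
          intro a _
          exact Finset.sum_congr rfl fun j _ => hR i a j
      _ = ∑ j, ∑ a, (N:ℂ)⁻¹ * Y (j,a) (i,a) := Finset.sum_comm
      _ = ∑ j, (N:ℂ)⁻¹ * redA Y j i := by
          apply Finset.sum_congr rfl
          intro j _
          unfold redA
          rw [Finset.mul_sum]
  rw [htr]
  exact Finset.sum_comm

lemma ctrlU_conjT_mul {N : ℕ} {n' : Type*} [Fintype n'] [DecidableEq n']
    (Ui : Fin N → Matrix n' n' ℂ) (hUi : ∀ i, Ui i ∈ Matrix.unitaryGroup n' ℂ) :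
    (ctrlU Ui)ᴴ * ctrlU Ui = 1 := by
  ext ⟨i, a⟩ ⟨k, c⟩
  rw [Matrix.mul_apply, Fintype.sum_prod_type]
  have hterm : ∀ (j : Fin N) (b : n'),
      (ctrlU Ui)ᴴ (i,a) (j,b) * ctrlU Ui (j,b) (k,c)
        = if j = i ∧ j = k then (starRingEnd ℂ) (Ui j b a) * Ui j b c else 0 := by
    intro j b
    rw [Matrix.conjTranspose_apply]
    unfold ctrlU
    by_cases h1 : j = i <;> by_cases h2 : j = k <;>
      simp [h1, h2, RCLike.star_def, apply_ite (starRingEnd ℂ), ite_mul]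
  rw [Finset.sum_congr rfl (fun j _ => Finset.sum_congr rfl (fun b _ => hterm j b))]
  by_cases hik : i = k
  · subst hik
    rw [Finset.sum_eq_single i]
    · have hu : (Ui i)ᴴ * Ui i = 1 := by
        have := (Unitary.mem_iff.mp (hUi i)).1
        rwa [Matrix.star_eq_conjTranspose] at this
      have h2 := congrFun (congrFun hu a) c
      rw [Matrix.mul_apply] at h2
      calc ∑ b : n', (if i = i ∧ i = i then (starRingEnd ℂ) (Ui i b a) * Ui i b c else 0)
          = ∑ b : n', (Ui i)ᴴ a b * Ui i b c := by
            apply Finset.sum_congr rfl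
            intro b _
            rw [if_pos ⟨rfl, rfl⟩, Matrix.conjTranspose_apply]
            rfl
        _ = (1 : Matrix n' n' ℂ) a c := h2
        _ = (1 : Matrix (Fin N × n') (Fin N × n') ℂ) (i,a) (i,c) := by
            rw [Matrix.one_apply, Matrix.one_apply]
            simp [Prod.ext_iff]
    · intro j _ hj
      simp [hj]
    · intro h
      exact absurd (Finset.mem_univ i) h
  · rw [Finset.sum_eq_zero, Matrix.one_apply_ne (by simp [hik, Prod.ext_iff])]
    intro j _
    rw [Finset.sum_eq_zero]
    intro b _
    have : ¬(j = i ∧ j = k) := fun ⟨h1, h2⟩ => hik (h1 ▸ h2 ▸ rfl)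
    rw [if_neg this]

lemma ctrlU_mul_conjT {N : ℕ} {n' : Type*} [Fintype n'] [DecidableEq n']
    (Ui : Fin N → Matrix n' n' ℂ) (hUi : ∀ i, Ui i ∈ Matrix.unitaryGroup n' ℂ) :
    ctrlU Ui * (ctrlU Ui)ᴴ = 1 :=
  mul_eq_one_comm.mp (ctrlU_conjT_mul Ui hUi)

lemma psd_of_herm_idem {n : Type*} [Fintype n] [DecidableEq n] {P : Matrix n n ℂ}
    (h1 : P.IsHermitian) (h2 : P * P = P) : P.PosSemidef := by
  have := Matrix.posSemidef_conjTranspose_mul_self P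
  rwa [h1.eq, h2] at this

lemma pm_one_herm {N : ℕ} {n' : Type*} [Fintype n'] [DecidableEq n'] :
    (pmTensor N (1 : Matrix n' n' ℂ)).IsHermitian := by
  ext ⟨i, a⟩ ⟨j, b⟩
  rw [Matrix.conjTranspose_apply]
  unfold pmTensor
  simp only [RCLike.star_def, _root_.map_mul, map_inv₀, map_natCast]
  rw [Matrix.one_apply, Matrix.one_apply]
  by_cases h : a = b
  · simp [h]
  · simp [h, Ne.symm h]

lemma pm_one_idem {N : ℕ} {n' : Type*} [Fintype n'] [DecidableEq n'] (hN : 0 < N) :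
    pmTensor N (1 : Matrix n' n' ℂ) * pmTensor N (1 : Matrix n' n' ℂ)
      = pmTensor N (1 : Matrix n' n' ℂ) := by
  have hNC : ((N:ℕ):ℂ) ≠ 0 := Nat.cast_ne_zero.mpr hN.ne'
  ext ⟨i, a⟩ ⟨j, b⟩
  rw [Matrix.mul_apply, Fintype.sum_prod_type]
  calc ∑ k : Fin N, ∑ c : n',
        pmTensor N (1 : Matrix n' n' ℂ) (i,a) (k,c) * pmTensor N (1 : Matrix n' n' ℂ) (k,c) (j,b)
      = ∑ k : Fin N, (N:ℂ)⁻¹ * (N:ℂ)⁻¹ * (1 : Matrix n' n' ℂ) a b := by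
        apply Finset.sum_congr rfl
        intro k _
        unfold pmTensor
        calc ∑ c : n', (N:ℂ)⁻¹ * (1 : Matrix n' n' ℂ) a c * ((N:ℂ)⁻¹ * (1 : Matrix n' n' ℂ) c b)
            = (N:ℂ)⁻¹ * (1 : Matrix n' n' ℂ) a a * ((N:ℂ)⁻¹ * (1 : Matrix n' n' ℂ) a b) := by
              rw [Finset.sum_eq_single a]
              · intro c _ hc
                simp [Matrix.one_apply, Ne.symm hc]
              · intro h
                exact absurd (Finset.mem_univ a) h
          _ = (N:ℂ)⁻¹ * (N:ℂ)⁻¹ * (1 : Matrix n' n' ℂ) a b := by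
              rw [Matrix.one_apply_eq]
              ring
    _ = pmTensor N (1 : Matrix n' n' ℂ) (i,a) (j,b) := by
        rw [Finset.sum_const, Finset.card_univ, Fintype.card_fin, nsmul_eq_mul]
        unfold pmTensor
        show (N:ℂ) * ((N:ℂ)⁻¹ * (N:ℂ)⁻¹ * (1 : Matrix n' n' ℂ) a b) = (N:ℂ)⁻¹ * (1 : Matrix n' n' ℂ) a b
        field_simp

lemma pm_sigma_herm {N : ℕ} {n' : Type*} [Fintype n']
    {σ : Matrix n' n' ℂ} (hσ : σ.IsHermitian) : (pmTensor N σ).IsHermitian := by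
  ext ⟨i, a⟩ ⟨j, b⟩
  rw [Matrix.conjTranspose_apply]
  unfold pmTensor
  simp only [RCLike.star_def, _root_.map_mul, map_inv₀, map_natCast]
  congr 1
  have := congrFun (congrFun hσ.eq a) b
  rw [Matrix.conjTranspose_apply] at this
  exact this

-- |Re tr(R Δ)| ≤ traceNorm Δ for 0 ≤ R ≤ 1
lemma re_trace_mul_le_traceNorm {n : Type*} [Fintype n] [DecidableEq n]
    {Δ R : Matrix n n ℂ} (hΔ : Δ.IsHermitian) (hR : R.PosSemidef)
    (hR1 : (1 - R).PosSemidef) : |((R * Δ).trace).re| ≤ traceNorm Δ := by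
  rw [traceNorm, dif_pos hΔ]
  set V : Matrix n n ℂ := (hΔ.eigenvectorUnitary : Matrix n n ℂ) with hV
  set D : Matrix n n ℂ := Matrix.diagonal (RCLike.ofReal ∘ hΔ.eigenvalues) with hD
  have hspec : Δ = V * D * Vᴴ := by
    rw [hV, hD, ← Matrix.star_eq_conjTranspose]
    exact hΔ.spectral_theorem
  have hVV : Vᴴ * V = 1 := by
    rw [← Matrix.star_eq_conjTranspose]
    exact Unitary.coe_star_mul_self hΔ.eigenvectorUnitary
  set S : Matrix n n ℂ := Vᴴ * R * V with hS
  have htr : (R * Δ).trace = (S * D).trace := by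
    rw [hspec]
    calc (R * (V * D * Vᴴ)).trace = (R * V * D * Vᴴ).trace := by
          rw [← Matrix.mul_assoc, ← Matrix.mul_assoc]
      _ = (Vᴴ * (R * V * D)).trace := (Matrix.trace_mul_comm _ _)
      _ = (S * D).trace := by rw [hS, ← Matrix.mul_assoc, ← Matrix.mul_assoc]
  have hdiag : ((S * D).trace).re = ∑ i, (S i i).re * hΔ.eigenvalues i := by
    unfold Matrix.trace Matrix.diag
    rw [Complex.re_sum]
    apply Finset.sum_congr rfl
    intro i _
    rw [hD, Matrix.mul_diagonal]
    have : ((RCLike.ofReal ∘ hΔ.eigenvalues) i : ℂ) = ((hΔ.eigenvalues i : ℝ) : ℂ) := rfl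
    rw [this, Complex.mul_re, Complex.ofReal_re, Complex.ofReal_im]
    ring
  have hSpsd : S.PosSemidef := hR.conjTranspose_mul_mul_same V
  have hS1psd : (1 - S).PosSemidef := by
    have h := hR1.conjTranspose_mul_mul_same V
    have heq : Vᴴ * (1 - R) * V = 1 - S := by
      rw [Matrix.mul_sub, Matrix.mul_one, Matrix.sub_mul, hVV, hS]
    rwa [heq] at h
  have hdbound : ∀ i, 0 ≤ (S i i).re ∧ (S i i).re ≤ 1 := by
    intro i
    have e1 : star (Pi.single i 1 : n → ℂ) ⬝ᵥ S.mulVec (Pi.single i 1) = S i i := by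
      rw [Matrix.mulVec_single]
      simp [dotProduct, Pi.single_apply, apply_ite (starRingEnd ℂ)]
    have e2 : star (Pi.single i 1 : n → ℂ) ⬝ᵥ (1 - S).mulVec (Pi.single i 1)
        = 1 - S i i := by
      rw [Matrix.mulVec_single]
      simp [dotProduct, Pi.single_apply, apply_ite (starRingEnd ℂ),
        Matrix.sub_apply, Matrix.one_apply]
    have b1 := hSpsd.dotProduct_mulVec_nonneg (Pi.single i 1)
    rw [e1] at b1
    have b2 := hS1psd.dotProduct_mulVec_nonneg (Pi.single i 1)
    rw [e2] at b2
    constructor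
    · exact (Complex.le_def.mp b1).1
    · have := (Complex.le_def.mp b2).1
      simp only [Complex.sub_re, Complex.one_re, Complex.zero_re] at this
      linarith
  rw [htr, hdiag]
  calc |∑ i, (S i i).re * hΔ.eigenvalues i| ≤ ∑ i, |(S i i).re * hΔ.eigenvalues i| :=
        Finset.abs_sum_le_sum_abs _ _
    _ ≤ ∑ i, |hΔ.eigenvalues i| := by
        apply Finset.sum_le_sum
        intro i _
        rw [abs_mul]
        have h := hdbound i
        have : |(S i i).re| ≤ 1 := abs_le.mpr ⟨by linarith [h.1], h.2⟩
        nlinarith [abs_nonneg (hΔ.eigenvalues i), abs_nonneg ((S i i).re)]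

lemma trace_Q_tau {N : ℕ} {n' : Type*} [Fintype n'] [DecidableEq n'] (hN : 0 < N)
    (σ : Matrix n' n' ℂ) (hσ1 : σ.trace = 1) :
    (pmTensor N (1 : Matrix n' n' ℂ) * pmTensor N σ).trace = 1 := by
  have hNC : ((N:ℕ):ℂ) ≠ 0 := Nat.cast_ne_zero.mpr hN.ne'
  unfold Matrix.trace Matrix.diag
  rw [Fintype.sum_prod_type]
  have hi : ∀ i : Fin N, ∑ a : n', (pmTensor N (1 : Matrix n' n' ℂ) * pmTensor N σ) (i,a) (i,a)
      = (N:ℂ)⁻¹ * σ.trace := by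
    intro i
    have ha : ∀ a : n', (pmTensor N (1 : Matrix n' n' ℂ) * pmTensor N σ) (i,a) (i,a)
        = (N:ℂ)⁻¹ * σ a a := by
      intro a
      rw [Matrix.mul_apply, Fintype.sum_prod_type]
      have hj : ∀ j : Fin N, ∑ b : n',
          pmTensor N (1 : Matrix n' n' ℂ) (i,a) (j,b) * pmTensor N σ (j,b) (i,a)
          = (N:ℂ)⁻¹ * ((N:ℂ)⁻¹ * σ a a) := by
        intro j
        rw [Finset.sum_eq_single a]
        · show (N:ℂ)⁻¹ * (1 : Matrix n' n' ℂ) a a * ((N:ℂ)⁻¹ * σ a a) = _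
          rw [Matrix.one_apply_eq]
          ring
        · intro b _ hb
          show (N:ℂ)⁻¹ * (1 : Matrix n' n' ℂ) a b * ((N:ℂ)⁻¹ * σ b a) = 0
          rw [Matrix.one_apply_ne (Ne.symm hb)]
          ring
        · intro h
          exact absurd (Finset.mem_univ a) h
      rw [Finset.sum_congr rfl (fun j _ => hj j), Finset.sum_const, Finset.card_univ,
        Fintype.card_fin, nsmul_eq_mul]
      field_simp
    rw [Finset.sum_congr rfl (fun a _ => ha a), ← Finset.mul_sum]
    rfl
  rw [Finset.sum_congr rfl (fun i _ => hi i), Finset.sum_const, Finset.card_univ,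
    Fintype.card_fin, nsmul_eq_mul, hσ1]
  field_simp

theorem untwisted_fourier_measurement_relent_bound
    (m : ℕ) (n' : Type*) [Fintype n'] [DecidableEq n']
    (ε : ℝ) (hε : 0 < ε) (hε1 : ε < 1)
    (Ui : Fin (2^m) → Matrix n' n' ℂ)
    (hUi : ∀ i, Ui i ∈ Matrix.unitaryGroup n' ℂ)
    (σ : Matrix n' n' ℂ) (hσ : σ.PosSemidef) (hσ1 : σ.trace = 1)
    (ρ : Matrix (Fin (2^m) × n') (Fin (2^m) × n') ℂ)
    (hρ : ρ.PosSemidef) (hρ1 : ρ.trace = 1)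
    (hclose : traceNorm (ρ - ctrlU Ui * pmTensor (2^m) σ * (ctrlU Ui)ᴴ) ≤ ε) :
    (1 - ε) * m - binEnt ε ≤
      ∑ k : Fin (2^m),
        probF ((ctrlU Ui)ᴴ * ρ * ctrlU Ui) k *
          Real.logb 2 (probF ((ctrlU Ui)ᴴ * ρ * ctrlU Ui) k * 2^m) := by
  have hN : 0 < 2^m := pow_pos (by norm_num) m
  set U : Matrix (Fin (2^m) × n') (Fin (2^m) × n') ℂ := ctrlU Ui with hU
  set τ : Matrix (Fin (2^m) × n') (Fin (2^m) × n') ℂ := pmTensor (2^m) σ with hτ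
  set Q : Matrix (Fin (2^m) × n') (Fin (2^m) × n') ℂ :=
    pmTensor (2^m) (1 : Matrix n' n' ℂ) with hQ
  set X : Matrix (Fin (2^m) × n') (Fin (2^m) × n') ℂ := Uᴴ * ρ * U with hX
  have hUU : Uᴴ * U = 1 := ctrlU_conjT_mul Ui hUi
  have hUU' : U * Uᴴ = 1 := ctrlU_mul_conjT Ui hUi
  have hXpsd : X.PosSemidef := hρ.conjTranspose_mul_mul_same U
  have hp0 : ∀ k, 0 ≤ probF X k := fun k => probF_nonneg hXpsd k
  have hsum : ∑ k, probF X k = 1 := by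
    rw [sum_probF]
    have htx : X.trace = ρ.trace := by
      calc (Uᴴ * ρ * U).trace = (U * (Uᴴ * ρ)).trace := Matrix.trace_mul_comm _ _
        _ = (U * Uᴴ * ρ).trace := by rw [Matrix.mul_assoc]
        _ = ρ.trace := by rw [hUU', Matrix.one_mul]
    rw [htx, hρ1, Complex.one_re]
  have hk0 : 1 - ε ≤ probF X ⟨0, hN⟩ := by
    rw [probF_zero hN]
    have hQherm : Q.IsHermitian := pm_one_herm
    have hQidem : Q * Q = Q := pm_one_idem hN
    have hQpsd : Q.PosSemidef := psd_of_herm_idem hQherm hQidem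
    have hRpsd : (U * Q * Uᴴ).PosSemidef := hQpsd.mul_mul_conjTranspose_same U
    have hR1psd : (1 - U * Q * Uᴴ).PosSemidef := by
      have h1q : (1 - Q).PosSemidef := by
        apply psd_of_herm_idem (Matrix.isHermitian_one.sub hQherm)
        rw [Matrix.mul_sub, Matrix.mul_one, Matrix.sub_mul, Matrix.one_mul, hQidem]
        noncomm_ring
      have h2 := h1q.mul_mul_conjTranspose_same U
      have heq : U * (1 - Q) * Uᴴ = 1 - U * Q * Uᴴ := by
        rw [Matrix.mul_sub, Matrix.mul_one, Matrix.sub_mul, hUU']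
      rwa [heq] at h2
    have hτherm : τ.IsHermitian := pm_sigma_herm hσ.1
    have hUτherm : (U * τ * Uᴴ).IsHermitian := by
      have hct : (U * τ * Uᴴ)ᴴ = U * τᴴ * Uᴴ := by
        rw [Matrix.conjTranspose_mul, Matrix.conjTranspose_mul,
          Matrix.conjTranspose_conjTranspose]
        noncomm_ring
      show (U * τ * Uᴴ)ᴴ = U * τ * Uᴴ
      rw [hct, hτherm.eq]
    have hΔherm : (ρ - U * τ * Uᴴ).IsHermitian := hρ.1.sub hUτherm
    have hkey := re_trace_mul_le_traceNorm hΔherm hRpsd hR1psd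
    have htr1 : (Q * X).trace = ((U * Q * Uᴴ) * ρ).trace := by
      have he1 : Q * X = (Q * Uᴴ * ρ) * U := by
        rw [hX]
        noncomm_ring
      rw [he1]
      calc ((Q * Uᴴ * ρ) * U).trace = (U * (Q * Uᴴ * ρ)).trace :=
            Matrix.trace_mul_comm _ _
        _ = ((U * Q * Uᴴ) * ρ).trace := by noncomm_ring
    have htr2 : ((U * Q * Uᴴ) * (U * τ * Uᴴ)).trace = (Q * τ).trace := by
      have he : (U * Q * Uᴴ) * (U * τ * Uᴴ) = U * ((Q * τ) * Uᴴ) := by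
        calc (U * Q * Uᴴ) * (U * τ * Uᴴ) = U * Q * ((Uᴴ * U) * (τ * Uᴴ)) := by
              noncomm_ring
          _ = U * ((Q * τ) * Uᴴ) := by rw [hUU]; noncomm_ring
      rw [he]
      calc (U * ((Q * τ) * Uᴴ)).trace = (((Q * τ) * Uᴴ) * U).trace :=
            Matrix.trace_mul_comm _ _
        _ = ((Q * τ) * (Uᴴ * U)).trace := by rw [Matrix.mul_assoc]
        _ = (Q * τ).trace := by rw [hUU, Matrix.mul_one]
    have hρsplit : (U * Q * Uᴴ) * ρ
        = (U * Q * Uᴴ) * (ρ - U * τ * Uᴴ) + (U * Q * Uᴴ) * (U * τ * Uᴴ) := by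
      noncomm_ring
    have htq : (Q * τ).trace = 1 := trace_Q_tau hN σ hσ1
    have hval : ((Q * X).trace).re
        = (((U * Q * Uᴴ) * (ρ - U * τ * Uᴴ)).trace).re + 1 := by
      rw [htr1, hρsplit, Matrix.trace_add, Complex.add_re, htr2, htq, Complex.one_re]
    rw [hval]
    have hcl : traceNorm (ρ - U * τ * Uᴴ) ≤ ε := hclose
    have := abs_le.mp (le_trans hkey hcl)
    linarith [this.1]
  exact classical_bound m ε hε hε1 (fun k => probF X k) ⟨0, hN⟩ hp0 hsum hk0

end
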